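/- If n is divisible by 4, say n = 2m = 4p, then there exists an invariant w ∈ A_n = ker D_n such that π_{m,n}(w) = x_0^3. -/

import Mathlib

open MvPolynomial Finset
open Fin.NatCast

noncomputable def Dw (K : Type) [CommRing K] (n : ℕ) :
    Derivation K (MvPolynomial (Fin (n + 1)) K) (MvPolynomial (Fin (n + 1)) K) :=
  MvPolynomial.mkDerivation K fun i =>
    if i.1 = 0 then 0 else
      MvPolynomial.X ⟨i.1 - 1, Nat.lt_of_le_of_lt (Nat.sub_le _ _) i.isLt⟩

noncomputable def piHom (K : Type) [CommRing K] (m n : ℕ) :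
    MvPolynomial (Fin (n + 1)) K →ₐ[K] MvPolynomial (Fin (m + 1)) K :=
  MvPolynomial.aeval fun i : Fin (n + 1) =>
    if i.1 < n - m then 0 else MvPolynomial.X ((i.1 - (n - m) : ℕ) : Fin (m + 1))
open MvPolynomial Finset

namespace Stmt9Aux

/-- Binomial coefficient with integer (possibly negative) lower index, ℚ-valued. -/
def cz (M : ℕ) (z : ℤ) : ℚ := if 0 ≤ z then (M.choose z.toNat : ℚ) else 0

lemma cz_neg {M : ℕ} {z : ℤ} (h : z < 0) : cz M z = 0 := by
  simp [cz, not_le.mpr h]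

lemma cz_ofNat (M t : ℕ) : cz M (t : ℤ) = M.choose t := by
  simp [cz]

lemma cz_big {M : ℕ} {z : ℤ} (h : (M : ℤ) < z) : cz M z = 0 := by
  have h0 : 0 ≤ z := le_trans (Int.ofNat_nonneg M) h.le
  rw [cz, if_pos h0, Nat.choose_eq_zero_of_lt (by omega), Nat.cast_zero]

lemma cz_abs (M : ℕ) (z : ℤ) :
    ((z : ℚ) + 1) * cz M (z + 1) = ((M : ℚ) - (z : ℚ)) * cz M z := by
  rcases lt_trichotomy z (-1) with h | h | h
  · rw [cz_neg (by omega), cz_neg (by omega)]; ring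
  · subst h
    rw [cz_neg (show (-1 : ℤ) < 0 by norm_num)]
    norm_num
  · obtain ⟨t, rfl⟩ : ∃ t : ℕ, z = (t : ℤ) := ⟨z.toNat, by omega⟩
    rw [show ((t : ℤ) + 1) = ((t + 1 : ℕ) : ℤ) by push_cast; ring, cz_ofNat, cz_ofNat]
    by_cases ht : t ≤ M
    · have h1 := Nat.choose_succ_right_eq M t
      have h2 : ((M.choose (t + 1) * (t + 1) : ℕ) : ℚ) = ((M.choose t * (M - t) : ℕ) : ℚ) := by
        exact_mod_cast congrArg (Nat.cast : ℕ → ℚ) h1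
      push_cast [ht] at h2
      push_cast
      linarith
    · rw [Nat.choose_eq_zero_of_lt (by omega), Nat.choose_eq_zero_of_lt (by omega)]
      norm_num

lemma cz_pascal (M : ℕ) (z : ℤ) : cz (M + 1) (z + 1) = cz M z + cz M (z + 1) := by
  rcases lt_trichotomy z (-1) with h | h | h
  · rw [cz_neg (by omega), cz_neg (by omega), cz_neg (by omega)]; ring
  · subst h; norm_num [cz]
  · obtain ⟨t, rfl⟩ : ∃ t : ℕ, z = (t : ℤ) := ⟨z.toNat, by omega⟩
    rw [show ((t : ℤ) + 1) = ((t + 1 : ℕ) : ℤ) by push_cast; ring, cz_ofNat, cz_ofNat, cz_ofNat]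
    rw [Nat.choose_succ_succ]
    push_cast
    ring

lemma cz_symm (M : ℕ) (z : ℤ) : cz M ((M : ℤ) - z) = cz M z := by
  rcases lt_or_ge z 0 with h | h
  · rw [cz_neg h, cz_big (by omega)]
  · rcases le_or_gt z M with h2 | h2
    · obtain ⟨t, rfl⟩ : ∃ t : ℕ, z = (t : ℤ) := ⟨z.toNat, by omega⟩
      have ht : t ≤ M := by exact_mod_cast h2
      rw [show ((M : ℤ) - t) = ((M - t : ℕ) : ℤ) by omega, cz_ofNat, cz_ofNat,
        Nat.choose_symm ht]
    · rw [cz_neg (by omega), cz_big h2]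




/-- Dixon summand. -/
def FF (n b c j : ℕ) : ℚ :=
  (-1) ^ j * cz (n + b) ((n : ℤ) - b + j) * cz (b + c) (j : ℤ) * cz (c + n) ((c : ℤ) - b + j)

/-- WZ certificate for Dixon's recurrence. -/
def GG (n b c j : ℕ) : ℚ :=
  (-1) ^ j * ((j : ℚ) / 2) * cz (n + b) ((n : ℤ) - b + j) * cz (b + c) (j : ℤ) *
    cz (c + n) ((c : ℤ) - b + j - 1)

lemma wz (n b c j : ℕ) :
    ((n : ℚ) + b + c + 1) * FF n b c j - ((n : ℚ) + 1) * FF (n + 1) b c j =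
      GG n b c (j + 1) - GG n b c j := by
  set C1 := cz (n + b) ((n : ℤ) - b + j) with hC1def
  set C1p := cz (n + b) ((n : ℤ) - b + j + 1) with hC1pdef
  set C2 := cz (b + c) (j : ℤ) with hC2def
  set C2p := cz (b + c) ((j : ℤ) + 1) with hC2pdef
  set C3 := cz (c + n) ((c : ℤ) - b + j) with hC3def
  set E3 := cz (c + n) ((c : ℤ) - b + j - 1) with hE3def
  have hpas1 : cz (n + 1 + b) ((n + 1 : ℕ) - (b : ℤ) + j) = C1 + C1p := by
    rw [show ((n + 1 : ℕ) - (b : ℤ) + j) = ((n : ℤ) - b + j) + 1 by push_cast; ring,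
      show n + 1 + b = (n + b) + 1 by ring, cz_pascal, hC1def, hC1pdef]
  have hpas3 : cz (c + (n + 1)) ((c : ℤ) - b + j) = E3 + C3 := by
    rw [show ((c : ℤ) - b + j) = ((c : ℤ) - b + j - 1) + 1 by ring,
      show c + (n + 1) = (c + n) + 1 by ring, cz_pascal, hE3def, hC3def]
    rw [show ((c : ℤ) - b + j - 1 + 1) = (c : ℤ) - b + j by ring]
  have eB : cz (n + b) ((n : ℤ) - b + ((j + 1 : ℕ) : ℤ)) = C1p := by
    rw [hC1pdef]; congr 1 <;> omega
  have eC : cz (b + c) (((j + 1 : ℕ) : ℤ)) = C2p := by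
    rw [hC2pdef]; congr 1 <;> omega
  have eD : cz (c + n) ((c : ℤ) - b + ((j + 1 : ℕ) : ℤ) - 1) = C3 := by
    rw [hC3def]; congr 1 <;> omega
  have h1 : ((n : ℚ) - b + j + 1) * C1p = (2 * (b : ℚ) - j) * C1 := by
    have h := cz_abs (n + b) ((n : ℤ) - b + j)
    push_cast at h
    rw [hC1pdef, hC1def]; push_cast
    linear_combination h
  have h2 : ((j : ℚ) + 1) * C2p = ((b : ℚ) + c - j) * C2 := by
    have h := cz_abs (b + c) (j : ℤ)
    push_cast at h
    rw [hC2pdef, hC2def]; push_cast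
    linear_combination h
  have h3 : ((c : ℚ) - b + j) * C3 = ((n : ℚ) + b - j + 1) * E3 := by
    have h := cz_abs (c + n) ((c : ℤ) - b + j - 1)
    rw [show ((c : ℤ) - b + j - 1 + 1) = (c : ℤ) - b + j by ring] at h
    push_cast at h
    rw [hC3def, hE3def]; push_cast
    linear_combination h
  have key : ((n : ℚ) + b + c + 1) * (C1 * C2 * C3) -
      ((n : ℚ) + 1) * ((C1 + C1p) * C2 * (E3 + C3)) =
      (-(((j : ℚ) + 1) / 2)) * (C1p * C2p * C3) - ((j : ℚ) / 2) * (C1 * C2 * E3) := by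
    linear_combination (C2 * (-C3 - E3 / 2)) * h1 + (C1p * C3 / 2) * h2 +
      (C2 * (C1 + C1p / 2)) * h3
  simp only [FF, GG]
  rw [hpas1, hpas3, eB, eC, eD, pow_succ]
  push_cast
  linear_combination ((-1 : ℚ)) ^ j * key




/-- The Dixon sum. -/
def DX (n b c : ℕ) : ℚ := ∑ j ∈ Finset.range (b + c + 1), FF n b c j

lemma GG_zero (n b c : ℕ) : GG n b c 0 = 0 := by
  simp [GG]

lemma GG_top (n b c : ℕ) : GG n b c (b + c + 1) = 0 := by
  have h : cz (b + c) (((b + c + 1 : ℕ)) : ℤ) = 0 := cz_big (by exact_mod_cast Nat.lt_succ_self _)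
  rw [GG, h]
  ring

lemma dx_rec (n b c : ℕ) :
    ((n : ℚ) + 1) * DX (n + 1) b c = ((n : ℚ) + b + c + 1) * DX n b c := by
  have tele : ∑ j ∈ Finset.range (b + c + 1), (GG n b c (j + 1) - GG n b c j)
      = GG n b c (b + c + 1) - GG n b c 0 := Finset.sum_range_sub (GG n b c) (b + c + 1)
  have hsum : ∑ j ∈ Finset.range (b + c + 1),
      (((n : ℚ) + b + c + 1) * FF n b c j - ((n : ℚ) + 1) * FF (n + 1) b c j)
      = ∑ j ∈ Finset.range (b + c + 1), (GG n b c (j + 1) - GG n b c j) :=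
    Finset.sum_congr rfl fun j _ => wz n b c j
  rw [tele, GG_zero, GG_top] at hsum
  rw [Finset.sum_sub_distrib, ← Finset.mul_sum, ← Finset.mul_sum] at hsum
  rw [DX, DX]
  linarith

lemma dx_pos (n b c : ℕ) : 0 < (-1 : ℚ) ^ b * DX n b c := by
  induction n with
  | zero =>
    have hDX : DX 0 b c = (-1 : ℚ) ^ b * ((b + c).choose b : ℚ) := by
      rw [DX, Finset.sum_eq_single b]
      · rw [FF]
        have e1 : cz (0 + b) ((0 : ℕ) - (b : ℤ) + b) = 1 := by
          rw [show ((0 : ℕ) - (b : ℤ) + b) = ((0 : ℕ) : ℤ) by push_cast; ring, cz_ofNat]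
          simp
        have e3 : cz (c + 0) ((c : ℤ) - b + b) = 1 := by
          rw [show ((c : ℤ) - b + b) = ((c : ℕ) : ℤ) by push_cast; ring, cz_ofNat]
          simp [Nat.choose_self]
        rw [e1, e3, cz_ofNat]
        ring
      · intro j hj hjb
        rcases lt_or_gt_of_ne hjb with h | h
        · rw [FF, cz_neg (show ((0 : ℕ) : ℤ) - b + j < 0 by push_cast; omega)]
          ring
        · rw [FF, cz_big (show ((c + 0 : ℕ) : ℤ) < (c : ℤ) - b + j by push_cast; omega)]
          ring
      · intro h
        exact absurd (Finset.mem_range.mpr (by omega)) h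
    rw [hDX, ← mul_assoc, ← mul_pow]
    norm_num
    exact_mod_cast Nat.choose_pos (by omega : b ≤ b + c)
  | succ n ih =>
    have hrec := dx_rec n b c
    have hn1 : (0 : ℚ) < (n : ℚ) + 1 := by positivity
    have hn2 : (0 : ℚ) < (n : ℚ) + b + c + 1 := by positivity
    have : DX (n + 1) b c = (((n : ℚ) + b + c + 1) / ((n : ℚ) + 1)) * DX n b c := by
      field_simp
      linarith
    rw [this]
    calc (0:ℚ) < (((n : ℚ) + b + c + 1) / ((n : ℚ) + 1)) * ((-1 : ℚ) ^ b * DX n b c) := by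
          apply mul_pos (div_pos hn2 hn1) ih
      _ = (-1 : ℚ) ^ b * ((((n : ℚ) + b + c + 1) / ((n : ℚ) + 1)) * DX n b c) := by ring




/-- Summand of `sS`. -/
def tS (m i j a : ℕ) : ℚ :=
  (-1) ^ a * cz m (a : ℤ) * cz m ((i : ℤ) - a) * cz m ((a : ℤ) + j - m)

/-- Coefficient of `u^i v^j` in `((1+u)(1+v)(v-u))^m`, as an explicit sum. -/
def sS (m i j : ℕ) : ℚ := ∑ a ∈ Finset.range (m + 2), tS m i j a

/-- Certificate for the derivation identity. -/
def gS (m i j a : ℕ) : ℚ :=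
  (-1) ^ (a + 1) * a * cz m (a : ℤ) * cz m ((i : ℤ) + 1 - a) * cz m ((a : ℤ) + j - m)

lemma tS_point (m i j a : ℕ) :
    ((i : ℚ) + 1) * tS m (i + 1) j a + ((j : ℚ) + 1) * tS m i (j + 1) a -
      (3 * (m : ℚ) - i - j) * tS m i j a = gS m i j (a + 1) - gS m i j a := by
  set c0 := cz m (a : ℤ) with hc0
  set c1 := cz m ((a : ℤ) + 1) with hc1
  set A := cz m ((i : ℤ) - a) with hA
  set A' := cz m ((i : ℤ) - a + 1) with hA'
  set B := cz m ((a : ℤ) + j - m) with hB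
  set B' := cz m ((a : ℤ) + j - m + 1) with hB'
  have e1 : cz m (((i + 1 : ℕ) : ℤ) - a) = A' := by rw [hA']; congr 1 <;> omega
  have e2 : cz m ((a : ℤ) + ((j + 1 : ℕ) : ℤ) - m) = B' := by rw [hB']; congr 1 <;> omega
  have e3 : cz m (((a + 1 : ℕ) : ℤ)) = c1 := by rw [hc1]; congr 1 <;> omega
  have e4 : cz m ((i : ℤ) + 1 - ((a + 1 : ℕ) : ℤ)) = A := by rw [hA]; congr 1 <;> omega
  have e5 : cz m (((a + 1 : ℕ) : ℤ) + j - m) = B' := by rw [hB']; congr 1 <;> omega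
  have e6 : cz m ((i : ℤ) + 1 - (a : ℤ)) = A' := by rw [hA']; congr 1 <;> omega
  have h1 : (((i : ℚ) - a) + 1) * A' = ((m : ℚ) - ((i : ℚ) - a)) * A := by
    have h := cz_abs m ((i : ℤ) - a)
    push_cast at h
    rw [hA', hA]
    push_cast
    linear_combination h
  have h2 : ((a : ℚ) + 1) * c1 = ((m : ℚ) - a) * c0 := by
    have h := cz_abs m (a : ℤ)
    push_cast at h
    rw [hc1, hc0]
    push_cast
    linear_combination h
  have h3 : (((a : ℚ) + j - m) + 1) * B' = ((m : ℚ) - ((a : ℚ) + j - m)) * B := by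
    have h := cz_abs m ((a : ℤ) + j - m)
    push_cast at h
    rw [hB', hB]
    push_cast
    linear_combination h
  simp only [tS, gS]
  rw [e1, e2, e3, e4, e5, e6, pow_succ, pow_succ]
  push_cast
  linear_combination ((-1 : ℚ)) ^ a * ((c0 * B) * h1 + (-(A * B')) * h2 + (c0 * A) * h3)

lemma gS_zero (m i j : ℕ) : gS m i j 0 = 0 := by simp [gS]

lemma gS_top (m i j : ℕ) : gS m i j (m + 2) = 0 := by
  have h : cz m (((m + 2 : ℕ)) : ℤ) = 0 := cz_big (by exact_mod_cast by omega)
  rw [gS, h]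
  ring

lemma sS_step (m i j : ℕ) :
    ((i : ℚ) + 1) * sS m (i + 1) j + ((j : ℚ) + 1) * sS m i (j + 1) =
      (3 * (m : ℚ) - i - j) * sS m i j := by
  have tele : ∑ a ∈ Finset.range (m + 2), (gS m i j (a + 1) - gS m i j a)
      = gS m i j (m + 2) - gS m i j 0 := Finset.sum_range_sub (gS m i j) (m + 2)
  have hsum : ∑ a ∈ Finset.range (m + 2),
      (((i : ℚ) + 1) * tS m (i + 1) j a + ((j : ℚ) + 1) * tS m i (j + 1) a -
        (3 * (m : ℚ) - i - j) * tS m i j a)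
      = ∑ a ∈ Finset.range (m + 2), (gS m i j (a + 1) - gS m i j a) :=
    Finset.sum_congr rfl fun a _ => tS_point m i j a
  rw [tele, gS_zero, gS_top] at hsum
  simp only [Finset.sum_sub_distrib, Finset.sum_add_distrib, ← Finset.mul_sum] at hsum
  rw [sS, sS, sS]
  linarith

lemma sS_zero_left {m i : ℕ} (j : ℕ) (h : 2 * m < i) : sS m i j = 0 := by
  rw [sS]
  apply Finset.sum_eq_zero
  intro a ha
  rw [tS]
  rcases le_or_gt a m with h2 | h2
  · rw [cz_big (show (m : ℤ) < (i : ℤ) - a by omega)]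
    ring
  · rw [cz_big (show (m : ℤ) < ((a : ℕ) : ℤ) by exact_mod_cast h2)]
    ring

lemma sS_zero_right {m j : ℕ} (i : ℕ) (h : 2 * m < j) : sS m i j = 0 := by
  rw [sS]
  apply Finset.sum_eq_zero
  intro a ha
  rw [tS]
  rcases le_or_gt a m with h2 | h2
  · rw [cz_big (show (m : ℤ) < (a : ℤ) + j - m by omega)]
    ring
  · rw [cz_big (show (m : ℤ) < ((a : ℕ) : ℤ) by exact_mod_cast h2)]
    ring

lemma sS_zero_low {m i j : ℕ} (h : i + j < m) : sS m i j = 0 := by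
  rw [sS]
  apply Finset.sum_eq_zero
  intro a ha
  rw [tS]
  rcases lt_or_ge ((a : ℤ) + j) m with h2 | h2
  · rw [cz_neg (show (a : ℤ) + j - m < 0 by omega)]
    ring
  · rw [cz_neg (show (i : ℤ) - a < 0 by omega)]
    ring

lemma sS_central (p : ℕ) : sS (2 * p) (2 * p) (2 * p) = DX p p p := by
  rw [sS, DX, Finset.sum_range_succ, show 2 * p + 1 = p + p + 1 by ring]
  have hlast : tS (2 * p) (2 * p) (2 * p) (p + p + 1) = 0 := by
    rw [tS, cz_big (show ((2 * p : ℕ) : ℤ) < ((p + p + 1 : ℕ) : ℤ) by exact_mod_cast by omega)]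
    ring
  rw [hlast, add_zero]
  apply Finset.sum_congr rfl
  intro a ha
  rw [tS, FF]
  have e1 : cz (p + p) ((p : ℤ) - p + a) = cz (2 * p) (a : ℤ) := by
    rw [show p + p = 2 * p by ring]; congr 1; omega
  have e2 : cz (2 * p) (((2 * p : ℕ)) - (a : ℤ)) = cz (2 * p) (a : ℤ) := by
    rw [show ((2 * p : ℕ) : ℤ) - (a : ℤ) = ((2 * p : ℕ) : ℤ) - a by ring]
    exact cz_symm (2 * p) (a : ℤ)
  have e3 : cz (p + p) ((a : ℤ)) = cz (2 * p) (a : ℤ) := by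
    rw [show p + p = 2 * p by ring]
  have e4 : cz (2 * p) ((a : ℤ) + (2 * p : ℕ) - (2 * p : ℕ)) = cz (2 * p) (a : ℤ) := by
    congr 1; omega
  rw [e2, e4]
  rw [show (p : ℤ) - p + a = (a : ℤ) by ring, e3]




/-- Coefficient of the cubic invariant. -/
def cc (m i j k : ℕ) : ℚ :=
  if i + j + k = 3 * m then
    (-1) ^ (i + j) * (i.factorial : ℚ) * (j.factorial : ℚ) * (k.factorial : ℚ) * sS m i j
  else 0

lemma cc_step (m i j k : ℕ) :
    cc m (i + 1) j k + cc m i (j + 1) k + cc m i j (k + 1) = 0 := by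
  by_cases h : i + j + k + 1 = 3 * m
  · rw [cc, cc, cc, if_pos (by omega), if_pos (by omega), if_pos (by omega)]
    have hs := sS_step m i j
    have hk : ((k : ℚ) + 1) = 3 * (m : ℚ) - i - j := by
      have h' : (k + 1) + i + j = 3 * m := by omega
      have := congrArg (fun t : ℕ => (t : ℚ)) h'
      push_cast at this
      linarith
    rw [Nat.factorial_succ i, Nat.factorial_succ j, Nat.factorial_succ k,
      show i + 1 + j = (i + j) + 1 by ring, show i + (j + 1) = (i + j) + 1 by ring,
      pow_succ]
    push_cast
    linear_combination (-1 : ℚ) ^ (i + j) * (i.factorial : ℚ) * (j.factorial : ℚ) *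
        (k.factorial : ℚ) * (-hs) +
      (-1 : ℚ) ^ (i + j) * (i.factorial : ℚ) * (j.factorial : ℚ) * (k.factorial : ℚ) *
        sS m i j * hk
  · rw [cc, cc, cc, if_neg (by omega), if_neg (by omega), if_neg (by omega)]
    ring

lemma cc_zero_of_big {m i j k : ℕ} (h : 2 * m < i ∨ 2 * m < j ∨ 2 * m < k) :
    cc m i j k = 0 := by
  rw [cc]
  by_cases hg : i + j + k = 3 * m
  · rcases h with h | h | h
    · rw [sS_zero_left j h]; ring_nf; simp
    · rw [sS_zero_right i h]; ring_nf; simp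
    · rw [sS_zero_low (show i + j < m by omega)]; ring_nf; simp
  · rw [if_neg hg]

lemma cc_central (p : ℕ) :
    cc (2 * p) (2 * p) (2 * p) (2 * p) =
      ((2 * p).factorial : ℚ) ^ 3 * DX p p p := by
  rw [cc, if_pos (by ring), sS_central]
  have hsgn : (-1 : ℚ) ^ (2 * p + 2 * p) = 1 := by
    rw [show 2 * p + 2 * p = 2 * (2 * p) by ring, pow_mul]
    norm_num
  rw [hsgn]
  ring

lemma cc_central_ne (p : ℕ) : cc (2 * p) (2 * p) (2 * p) (2 * p) ≠ 0 := by
  rw [cc_central]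
  have h1 : DX p p p ≠ 0 := by
    have := dx_pos p p p
    intro h
    rw [h, mul_zero] at this
    exact lt_irrefl 0 this
  positivity



lemma shift_sum {A : Type*} [AddCommMonoid A] (N : ℕ) (F G : ℕ → A)
    (h0 : F 0 = 0) (hshift : ∀ i < N, F (i + 1) = G i) (htop : G N = 0) :
    ∑ i ∈ Finset.range (N + 1), F i = ∑ i ∈ Finset.range (N + 1), G i := by
  rw [Finset.sum_range_succ' F N, h0, add_zero, Finset.sum_range_succ G N, htop, add_zero]
  exact Finset.sum_congr rfl fun i hi => hshift i (Finset.mem_range.mp hi)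

lemma DwX (K : Type) [CommRing K] (N i : ℕ) (hi : i ≤ N) :
    Dw K N (X ((i : ℕ) : Fin (N + 1))) =
      if i = 0 then 0 else X (((i - 1 : ℕ)) : Fin (N + 1)) := by
  have hv : ((i : Fin (N + 1))).1 = i := Fin.val_cast_of_lt (by omega)
  unfold Dw
  rw [mkDerivation_X]
  by_cases h0 : i = 0
  · rw [if_pos (by rw [hv]; exact h0), if_pos h0]
  · rw [if_neg (by rw [hv]; exact h0), if_neg h0]
    congr 1
    apply Fin.ext
    simp only [hv, Fin.val_cast_of_lt (show i - 1 < N + 1 by omega)]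

lemma Dw_C_mul (K : Type) [CommRing K] (N : ℕ) (q : K) (x : MvPolynomial (Fin (N + 1)) K) :
    Dw K N (C q * x) = C q * Dw K N x := by
  have hC : Dw K N (C q) = 0 := by
    rw [← MvPolynomial.algebraMap_eq]
    exact Derivation.map_algebraMap _ q
  rw [Derivation.leibniz, hC, smul_eq_mul, smul_eq_mul, mul_zero, add_zero]

lemma Dw_mono (K : Type) [CommRing K] (N : ℕ) (q : K) (x y z : MvPolynomial (Fin (N + 1)) K) :
    Dw K N (C q * (x * y * z)) =
      C q * (Dw K N x * y * z) + C q * (x * Dw K N y * z) + C q * (x * y * Dw K N z) := by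
  rw [Dw_C_mul]
  rw [Derivation.leibniz, Derivation.leibniz]
  simp only [smul_eq_mul]
  ring


end Stmt9Aux



lemma piX (K : Type) [CommRing K] (m i : ℕ) (hi : i ≤ 2 * m) :
    piHom K m (2 * m) (X ((i : ℕ) : Fin (2 * m + 1))) =
      if i < m then 0 else X (((i - m : ℕ)) : Fin (m + 1)) := by
  have hv : ((i : Fin (2 * m + 1))).1 = i := Fin.val_cast_of_lt (by omega)
  unfold piHom
  rw [aeval_X]
  simp only [hv, show 2 * m - m = m from by omega]



open Stmt9Aux in
theorem stmt9 (K : Type) [Field K] [CharZero K] (p m n : ℕ)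
    (h4 : n = 4 * p) (h2 : n = 2 * m) :
    ∃ w : MvPolynomial (Fin (n + 1)) K,
      Dw K n w = 0 ∧ piHom K m n w = X ((0 : ℕ) : Fin (m + 1)) ^ 3 := by
  subst h2
  have hm : m = 2 * p := by omega
  set κ : ℚ →+* K := (algebraMap ℚ K : ℚ →+* K) with hκ
  have hccne : cc m m m m ≠ 0 := by rw [hm]; exact cc_central_ne p
  set XX : ℕ → MvPolynomial (Fin (2 * m + 1)) K :=
    fun i => X ((i : ℕ) : Fin (2 * m + 1)) with hXX
  set co : ℕ → ℕ → ℕ → K := fun i j k => κ (cc m i j k) with hco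
  set R : Finset ℕ := Finset.range (2 * m + 1) with hR
  set w0 : MvPolynomial (Fin (2 * m + 1)) K :=
    ∑ i ∈ R, ∑ j ∈ R, ∑ k ∈ R, C (co i j k) * (XX i * XX j * XX k) with hw0
  have co_big : ∀ i j k : ℕ, 2 * m < i ∨ 2 * m < j ∨ 2 * m < k → co i j k = 0 := by
    intro i j k h
    rw [hco]
    simp only
    rw [cc_zero_of_big h, map_zero]
  have co_off : ∀ i j k : ℕ, i + j + k ≠ 3 * m → co i j k = 0 := by
    intro i j k h
    rw [hco]
    simp only
    rw [cc, if_neg h, map_zero]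
  refine ⟨C (κ (cc m m m m)⁻¹) * w0, ?_, ?_⟩
  · -- invariance
    rw [Dw_C_mul]
    have hDw0 : Dw K (2 * m) w0 = 0 := by
      rw [hw0, map_sum]
      have expand : ∀ i ∈ R, Dw K (2 * m) (∑ j ∈ R, ∑ k ∈ R, C (co i j k) *
          (XX i * XX j * XX k)) =
          ∑ j ∈ R, ∑ k ∈ R,
            (C (co i j k) * (Dw K (2 * m) (XX i) * XX j * XX k) +
             C (co i j k) * (XX i * Dw K (2 * m) (XX j) * XX k) +
             C (co i j k) * (XX i * XX j * Dw K (2 * m) (XX k))) := by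
        intro i _
        rw [map_sum]
        refine Finset.sum_congr rfl fun j _ => ?_
        rw [map_sum]
        exact Finset.sum_congr rfl fun k _ => Dw_mono K (2 * m) _ _ _ _
      rw [Finset.sum_congr rfl expand]
      have split : ∑ i ∈ R, ∑ j ∈ R, ∑ k ∈ R,
            (C (co i j k) * (Dw K (2 * m) (XX i) * XX j * XX k) +
             C (co i j k) * (XX i * Dw K (2 * m) (XX j) * XX k) +
             C (co i j k) * (XX i * XX j * Dw K (2 * m) (XX k))) =
          (∑ i ∈ R, ∑ j ∈ R, ∑ k ∈ R, C (co i j k) * (Dw K (2 * m) (XX i) * XX j * XX k)) +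
          (∑ i ∈ R, ∑ j ∈ R, ∑ k ∈ R, C (co i j k) * (XX i * Dw K (2 * m) (XX j) * XX k)) +
          (∑ i ∈ R, ∑ j ∈ R, ∑ k ∈ R, C (co i j k) * (XX i * XX j * Dw K (2 * m) (XX k))) := by
        simp only [Finset.sum_add_distrib]
      rw [split]
      have hS1 : ∑ i ∈ R, ∑ j ∈ R, ∑ k ∈ R, C (co i j k) *
          (Dw K (2 * m) (XX i) * XX j * XX k) =
          ∑ i ∈ R, ∑ j ∈ R, ∑ k ∈ R, C (co (i + 1) j k) * (XX i * XX j * XX k) := by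
        rw [hR]
        apply shift_sum
        · apply Finset.sum_eq_zero; intro j _
          apply Finset.sum_eq_zero; intro k _
          rw [hXX]
          simp only
          rw [DwX K (2 * m) 0 (by omega), if_pos rfl]
          ring
        · intro i hi
          refine Finset.sum_congr rfl fun j _ => Finset.sum_congr rfl fun k _ => ?_
          rw [hXX]
          simp only
          rw [DwX K (2 * m) (i + 1) (by omega), if_neg (by omega), Nat.add_sub_cancel]
        · apply Finset.sum_eq_zero; intro j _
          apply Finset.sum_eq_zero; intro k _
          rw [co_big (2 * m + 1) j k (by omega), map_zero, zero_mul]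
      have hS2 : ∑ i ∈ R, ∑ j ∈ R, ∑ k ∈ R, C (co i j k) *
          (XX i * Dw K (2 * m) (XX j) * XX k) =
          ∑ i ∈ R, ∑ j ∈ R, ∑ k ∈ R, C (co i (j + 1) k) * (XX i * XX j * XX k) := by
        refine Finset.sum_congr rfl fun i _ => ?_
        rw [hR]
        apply shift_sum
        · apply Finset.sum_eq_zero; intro k _
          rw [hXX]
          simp only
          rw [DwX K (2 * m) 0 (by omega), if_pos rfl]
          ring
        · intro j hj
          refine Finset.sum_congr rfl fun k _ => ?_
          rw [hXX]
          simp only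
          rw [DwX K (2 * m) (j + 1) (by omega), if_neg (by omega), Nat.add_sub_cancel]
        · apply Finset.sum_eq_zero; intro k _
          rw [co_big i (2 * m + 1) k (by omega), map_zero, zero_mul]
      have hS3 : ∑ i ∈ R, ∑ j ∈ R, ∑ k ∈ R, C (co i j k) *
          (XX i * XX j * Dw K (2 * m) (XX k)) =
          ∑ i ∈ R, ∑ j ∈ R, ∑ k ∈ R, C (co i j (k + 1)) * (XX i * XX j * XX k) := by
        refine Finset.sum_congr rfl fun i _ => Finset.sum_congr rfl fun j _ => ?_
        rw [hR]
        apply shift_sum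
        · rw [hXX]
          simp only
          rw [DwX K (2 * m) 0 (by omega), if_pos rfl]
          ring
        · intro k hk
          rw [hXX]
          simp only
          rw [DwX K (2 * m) (k + 1) (by omega), if_neg (by omega), Nat.add_sub_cancel]
        · rw [co_big i j (2 * m + 1) (by omega), map_zero, zero_mul]
      rw [hS1, hS2, hS3]
      have merge : ∑ i ∈ R, ∑ j ∈ R, ∑ k ∈ R,
            (C (co (i + 1) j k) * (XX i * XX j * XX k) +
             C (co i (j + 1) k) * (XX i * XX j * XX k) +
             C (co i j (k + 1)) * (XX i * XX j * XX k)) = 0 := by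
        apply Finset.sum_eq_zero; intro i _
        apply Finset.sum_eq_zero; intro j _
        apply Finset.sum_eq_zero; intro k _
        have hsum : co (i + 1) j k + co i (j + 1) k + co i j (k + 1) = 0 := by
          rw [hco]
          simp only
          rw [← map_add, ← map_add, cc_step]
          exact map_zero κ
        calc C (co (i + 1) j k) * (XX i * XX j * XX k) +
              C (co i (j + 1) k) * (XX i * XX j * XX k) +
              C (co i j (k + 1)) * (XX i * XX j * XX k)
            = C (co (i + 1) j k + co i (j + 1) k + co i j (k + 1)) * (XX i * XX j * XX k) := by
              rw [map_add, map_add]; ring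
          _ = 0 := by rw [hsum, map_zero, zero_mul]
      have split2 : ∑ i ∈ R, ∑ j ∈ R, ∑ k ∈ R,
            (C (co (i + 1) j k) * (XX i * XX j * XX k) +
             C (co i (j + 1) k) * (XX i * XX j * XX k) +
             C (co i j (k + 1)) * (XX i * XX j * XX k)) =
          (∑ i ∈ R, ∑ j ∈ R, ∑ k ∈ R, C (co (i + 1) j k) * (XX i * XX j * XX k)) +
          (∑ i ∈ R, ∑ j ∈ R, ∑ k ∈ R, C (co i (j + 1) k) * (XX i * XX j * XX k)) +
          (∑ i ∈ R, ∑ j ∈ R, ∑ k ∈ R, C (co i j (k + 1)) * (XX i * XX j * XX k)) := by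
        simp only [Finset.sum_add_distrib]
      rw [← split2, merge]
    rw [hDw0, mul_zero]
  · -- projection
    rw [map_mul]
    have hπC : ∀ q : K, piHom K m (2 * m) (C q) = C q := by
      intro q
      unfold piHom
      rw [aeval_C, MvPolynomial.algebraMap_eq]
    have hπw0 : piHom K m (2 * m) w0 =
        C (co m m m) * X ((0 : ℕ) : Fin (m + 1)) ^ 3 := by
      rw [hw0, map_sum]
      have expand : ∀ i ∈ R, piHom K m (2 * m) (∑ j ∈ R, ∑ k ∈ R, C (co i j k) *
          (XX i * XX j * XX k)) =
          ∑ j ∈ R, ∑ k ∈ R, C (co i j k) *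
            ((if i < m then 0 else X (((i - m : ℕ)) : Fin (m + 1))) *
             (if j < m then 0 else X (((j - m : ℕ)) : Fin (m + 1))) *
             (if k < m then 0 else X (((k - m : ℕ)) : Fin (m + 1)))) := by
        intro i hiR
        have hi : i ≤ 2 * m := by rw [hR] at hiR; have := Finset.mem_range.mp hiR; omega
        rw [map_sum]
        refine Finset.sum_congr rfl fun j hjR => ?_
        have hj : j ≤ 2 * m := by rw [hR] at hjR; have := Finset.mem_range.mp hjR; omega
        rw [map_sum]
        refine Finset.sum_congr rfl fun k hkR => ?_
        have hk : k ≤ 2 * m := by rw [hR] at hkR; have := Finset.mem_range.mp hkR; omega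
        rw [map_mul, map_mul, map_mul, hπC, hXX]
        simp only
        rw [piX K m i hi, piX K m j hj, piX K m k hk]
      rw [Finset.sum_congr rfl expand]
      have hvan : ∀ i j k : ℕ, ¬(i = m ∧ j = m ∧ k = m) →
          C (co i j k) *
            ((if i < m then 0 else X (((i - m : ℕ)) : Fin (m + 1))) *
             (if j < m then 0 else X (((j - m : ℕ)) : Fin (m + 1))) *
             (if k < m then 0 else X (((k - m : ℕ)) : Fin (m + 1)))) = 0 := by
        intro i j k hne
        by_cases h1 : i < m
        · rw [if_pos h1]; ring
        · by_cases h2 : j < m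
          · rw [if_pos h2]; ring
          · by_cases h3 : k < m
            · rw [if_pos h3]; ring
            · rw [co_off i j k (by omega), map_zero, zero_mul]
      rw [Finset.sum_eq_single_of_mem m (by rw [hR]; exact Finset.mem_range.mpr (by omega))
        (fun i _ hi => Finset.sum_eq_zero fun j _ => Finset.sum_eq_zero fun k _ =>
          hvan i j k (by tauto))]
      rw [Finset.sum_eq_single_of_mem m (by rw [hR]; exact Finset.mem_range.mpr (by omega))
        (fun j _ hj => Finset.sum_eq_zero fun k _ => hvan m j k (by tauto))]
      rw [Finset.sum_eq_single_of_mem m (by rw [hR]; exact Finset.mem_range.mpr (by omega))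
        (fun k _ hk => hvan m m k (by tauto))]
      rw [if_neg (lt_irrefl m), Nat.sub_self]
      ring
    rw [hπw0, hπC, ← mul_assoc, ← map_mul, hco]
    simp only
    rw [← map_mul κ, inv_mul_cancel₀ hccne, map_one, map_one, one_mul]
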